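/- Let d1 : ℤ^13 → ℤ^13 be the integer matrix given in Table 2 of the paper (the differential d^1_{1,0} of the modified Bredon complex for PSL₂(O_{ℚ(√-5)})). Then the Smith normal form of d1 is diag(0,0,0,0,0,2,1,1,1,1,1,1,1); in particular d1 has rank 8, its cokernel is isomorphic to ℤ^5 ⊕ ℤ/2, and the elementary divisor 2 occurs with multiplicity one. -/

import Mathlib

/-- The matrix of Table 2: the differential `d¹_{1,0}` of the modified Bredon
complex for `PSL₂(O_{ℚ(√-5)})`. -/
def d1Bredon : Matrix (Fin 13) (Fin 13) ℤ :=
  !![-1,0,0,0,0,0,0,1,0,1,0,0,0;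
     0,-1,0,0,0,0,0,0,1,1,0,0,0;
     -1,0,0,0,0,0,0,0,1,0,1,0,0;
     0,-1,0,0,0,0,0,1,0,0,1,0,0;
     0,0,0,0,0,1,0,-1,0,-1,0,0,0;
     0,0,0,0,0,0,1,0,-1,-1,0,0,0;
     0,0,0,0,0,0,1,-1,0,0,-1,0,0;
     0,0,0,0,0,1,0,0,-1,0,-1,0,0;
     1,0,0,0,0,-1,0,0,0,0,0,-1,-1;
     0,1,0,0,0,0,-1,0,0,0,0,-1,-1;
     0,0,0,0,0,0,0,0,0,0,0,1,0;
     0,0,0,0,0,0,0,0,0,0,0,1,0;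
     0,0,0,0,0,0,0,0,0,0,0,1,0]

/-- Left transformation matrix for the Smith normal form. -/
def Psnf : Matrix (Fin 13) (Fin 13) ℤ :=
  !![-1,0,1,0,-1,0,0,1,0,0,0,0,0;
     -1,1,0,0,-1,1,0,0,-1,1,0,0,0;
     0,-1,0,1,0,-1,1,0,0,0,0,0,0;
     0,0,0,0,0,0,0,0,0,0,-1,1,0;
     0,0,0,0,0,0,0,0,0,0,-1,0,1;
     1,1,-1,-1,0,0,0,0,0,0,0,0,0;
     -1,0,0,0,0,0,0,0,0,0,0,0,0;
     0,-1,0,0,0,0,0,0,0,0,0,0,0;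
     1,0,-1,0,0,0,0,0,0,0,0,0,0;
     1,0,-1,0,1,0,0,0,0,0,0,0,0;
     0,0,0,0,0,1,0,0,0,0,0,0,0;
     -1,0,0,0,-1,0,0,0,-1,0,0,0,0;
     -1,0,0,0,-1,0,0,0,-1,0,-1,0,0]

/-- Right transformation matrix for the Smith normal form. -/
def Qsnf : Matrix (Fin 13) (Fin 13) ℤ :=
  !![1,0,1,0,0,0,1,0,1,0,0,0,0;
     1,0,1,0,0,1,0,1,0,0,0,0,0;
     0,1,0,0,0,0,0,0,0,0,0,0,0;
     0,0,0,1,0,0,0,0,0,0,0,0,0;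
     0,0,0,0,1,0,0,0,0,0,0,0,0;
     1,0,1,0,0,0,0,0,0,1,0,0,0;
     1,0,1,0,0,1,0,0,0,0,1,0,0;
     1,0,0,0,0,-1,0,0,1,0,0,0,0;
     1,0,0,0,0,0,0,0,0,0,0,0,0;
     0,0,1,0,0,1,0,0,0,0,0,0,0;
     0,0,1,0,0,0,0,0,0,0,0,0,0;
     0,0,0,0,0,0,0,0,0,0,0,1,-1;
     0,0,0,0,0,0,0,0,0,0,0,0,1]

/-- Inverse of `Psnf`. -/
def Pinv : Matrix (Fin 13) (Fin 13) ℤ :=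
  !![0,0,0,0,0,0,-1,0,0,0,0,0,0;
     0,0,0,0,0,0,0,-1,0,0,0,0,0;
     0,0,0,0,0,0,-1,0,-1,0,0,0,0;
     0,0,0,0,0,-1,0,-1,1,0,0,0,0;
     0,0,0,0,0,0,0,0,-1,1,0,0,0;
     0,0,0,0,0,0,0,0,0,0,1,0,0;
     0,0,1,0,0,1,0,0,-1,0,1,0,0;
     1,0,0,0,0,0,0,0,0,1,0,0,0;
     0,0,0,0,0,0,1,0,1,-1,0,-1,0;
     0,1,0,0,0,0,0,1,0,0,-1,-1,0;
     0,0,0,0,0,0,0,0,0,0,0,1,-1;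
     0,0,0,1,0,0,0,0,0,0,0,1,-1;
     0,0,0,0,1,0,0,0,0,0,0,1,-1]

/-- Inverse of `Qsnf`. -/
def Qinv : Matrix (Fin 13) (Fin 13) ℤ :=
  !![0,0,0,0,0,0,0,0,1,0,0,0,0;
     0,0,1,0,0,0,0,0,0,0,0,0,0;
     0,0,0,0,0,0,0,0,0,0,1,0,0;
     0,0,0,1,0,0,0,0,0,0,0,0,0;
     0,0,0,0,1,0,0,0,0,0,0,0,0;
     0,0,0,0,0,0,0,0,0,1,-1,0,0;
     1,0,0,0,0,0,0,-1,0,-1,0,0,0;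
     0,1,0,0,0,0,0,0,-1,-1,0,0,0;
     0,0,0,0,0,0,0,1,-1,1,-1,0,0;
     0,0,0,0,0,1,0,0,-1,0,-1,0,0;
     0,0,0,0,0,0,1,0,-1,-1,0,0,0;
     0,0,0,0,0,0,0,0,0,0,0,1,1;
     0,0,0,0,0,0,0,0,0,0,0,0,1]

/-- The Smith normal form diagonal matrix. -/
def Dmat : Matrix (Fin 13) (Fin 13) ℤ := Matrix.diagonal ![0,0,0,0,0,2,1,1,1,1,1,1,1]

/-- The matrix of the nonzero columns of `Dmat`. -/
def Cmat : Matrix (Fin 13) (Fin 8) ℤ :=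
  !![0,0,0,0,0,0,0,0;
     0,0,0,0,0,0,0,0;
     0,0,0,0,0,0,0,0;
     0,0,0,0,0,0,0,0;
     0,0,0,0,0,0,0,0;
     2,0,0,0,0,0,0,0;
     0,1,0,0,0,0,0,0;
     0,0,1,0,0,0,0,0;
     0,0,0,1,0,0,0,0;
     0,0,0,0,1,0,0,0;
     0,0,0,0,0,1,0,0;
     0,0,0,0,0,0,1,0;
     0,0,0,0,0,0,0,1]

/-- The coordinate-selection matrix. -/
def Rmat : Matrix (Fin 8) (Fin 13) ℤ :=
  !![0,0,0,0,0,1,0,0,0,0,0,0,0;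
     0,0,0,0,0,0,1,0,0,0,0,0,0;
     0,0,0,0,0,0,0,1,0,0,0,0,0;
     0,0,0,0,0,0,0,0,1,0,0,0,0;
     0,0,0,0,0,0,0,0,0,1,0,0,0;
     0,0,0,0,0,0,0,0,0,0,1,0,0;
     0,0,0,0,0,0,0,0,0,0,0,1,0;
     0,0,0,0,0,0,0,0,0,0,0,0,1]

/-- The linear map computing the cokernel presentation. -/
def phiMap : (Fin 13 → ℤ) →ₗ[ℤ] (Fin 5 → ℤ) × ZMod 2 :=
  LinearMap.prod
    (LinearMap.funLeft ℤ ℤ (Fin.castLE (by omega)))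
    ((Int.castAddHom (ZMod 2)).toIntLinearMap.comp (LinearMap.proj (5 : Fin 13)))

lemma hPP : Psnf * Pinv = 1 := by decide
lemma hQQ : Qsnf * Qinv = 1 := by decide
lemma hPAQ : Psnf * d1Bredon * Qsnf = Dmat := by decide
lemma hA : d1Bredon = Pinv * (Dmat * Qinv) := by decide
lemma hDCR : Dmat = Cmat * Rmat := by decide
lemma hCDR : Cmat = Dmat * Rmat.transpose := by decide
lemma hRC : Rmat * Cmat = Matrix.diagonal ![2,1,1,1,1,1,1,1] := by decide

lemma hPP' : Pinv * Psnf = 1 := mul_eq_one_comm.mp hPP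
lemma hQQ' : Qinv * Qsnf = 1 := mul_eq_one_comm.mp hQQ

lemma wval : ∀ i : Fin 13,
    (![0,0,0,0,0,2,1,1,1,1,1,1,1] : Fin 13 → ℤ) i
      = if (i : ℕ) < 5 then 0 else if i = 5 then 2 else 1 := by decide

lemma rank_Dmat : Dmat.rank = 8 := by
  have hw : ∀ k : Fin 8, (![2,1,1,1,1,1,1,1] : Fin 8 → ℤ) k ≠ 0 := by decide
  have hinj : Function.Injective Cmat.mulVecLin := by
    have hinj2 : Function.Injective ((Rmat * Cmat).mulVecLin) := by
      rw [hRC]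
      intro y z h
      funext k
      have hk := congrFun h k
      simp only [Matrix.mulVecLin_apply, Matrix.mulVec_diagonal] at hk
      exact mul_left_cancel₀ (hw k) hk
    rw [Matrix.mulVecLin_mul, LinearMap.coe_comp] at hinj2
    exact Function.Injective.of_comp hinj2
  have hrange : LinearMap.range Dmat.mulVecLin = LinearMap.range Cmat.mulVecLin := by
    apply le_antisymm
    · conv_lhs => rw [hDCR]
      rw [Matrix.mulVecLin_mul]
      exact LinearMap.range_comp_le_range _ _
    · conv_lhs => rw [hCDR]
      rw [Matrix.mulVecLin_mul]
      exact LinearMap.range_comp_le_range _ _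
  rw [Matrix.rank, hrange,
    ← (LinearEquiv.ofInjective Cmat.mulVecLin hinj).finrank_eq]
  simp

/-- The Smith normal form of `d1Bredon` is `diag(0,0,0,0,0,2,1,1,1,1,1,1,1)`;
in particular its rank is `8` and its cokernel is `ℤ⁵ ⊕ ℤ/2`. -/
theorem smith_normal_form_d1 :
    (∃ P Q : Matrix (Fin 13) (Fin 13) ℤ, IsUnit P.det ∧ IsUnit Q.det ∧
      P * d1Bredon * Q = Matrix.diagonal ![0,0,0,0,0,2,1,1,1,1,1,1,1]) ∧
    d1Bredon.rank = 8 ∧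
    Nonempty (((Fin 13 → ℤ) ⧸ LinearMap.range (Matrix.toLin' d1Bredon)) ≃+
      ((Fin 5 → ℤ) × ZMod 2)) := by
  have hPdet : IsUnit Psnf.det := Matrix.isUnit_det_of_right_inverse hPP
  have hQdet : IsUnit Qsnf.det := Matrix.isUnit_det_of_right_inverse hQQ
  have hPidet : IsUnit Pinv.det := Matrix.isUnit_det_of_left_inverse hPP
  have hQidet : IsUnit Qinv.det := Matrix.isUnit_det_of_left_inverse hQQ
  refine ⟨⟨Psnf, Qsnf, hPdet, hQdet, hPAQ⟩, ?_, ?_⟩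
  · -- rank
    rw [hA, Matrix.rank_mul_eq_right_of_isUnit_det Pinv _ hPidet,
      Matrix.rank_mul_eq_left_of_isUnit_det Qinv Dmat hQidet]
    exact rank_Dmat
  · -- cokernel
    have hker : LinearMap.ker phiMap = LinearMap.range (Matrix.toLin' Dmat) := by
      ext x
      simp only [LinearMap.mem_ker, LinearMap.mem_range, phiMap, LinearMap.prod_apply,
        Function.prod, Prod.mk_eq_zero, LinearMap.funLeft_apply, LinearMap.comp_apply,
        LinearMap.proj_apply, AddMonoidHom.coe_toIntLinearMap, Int.coe_castAddHom,
        funext_iff, Pi.zero_apply]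
      constructor
      · rintro ⟨h1, h2⟩
        rw [ZMod.intCast_zmod_eq_zero_iff_dvd] at h2
        obtain ⟨c, hc⟩ := h2
        refine ⟨fun i => if i = 5 then c else x i, fun i => ?_⟩
        rw [Matrix.toLin'_apply]
        simp only [Dmat] at *
        rw [Matrix.mulVec_diagonal, wval]
        by_cases h5 : (i : ℕ) < 5
        · rw [if_pos h5, zero_mul]
          have := h1 ⟨(i : ℕ), h5⟩
          rw [show Fin.castLE (by omega : 5 ≤ 13) ⟨(i : ℕ), h5⟩ = i from Fin.ext rfl] at this
          exact this.symm
        · rw [if_neg h5]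
          by_cases h6 : i = 5
          · subst h6
            rw [if_pos rfl, if_pos rfl]
            rw [hc]; push_cast; ring
          · rw [if_neg h6, if_neg h6, one_mul]
      · rintro ⟨y, hy⟩
        constructor
        · intro i
          rw [← hy (Fin.castLE (by omega) i), Matrix.toLin'_apply]
          simp only [Dmat]
          rw [Matrix.mulVec_diagonal, wval, if_pos (by exact i.isLt), zero_mul]
        · rw [← hy 5, Matrix.toLin'_apply]
          simp only [Dmat]
          rw [Matrix.mulVec_diagonal, wval, if_neg (by decide), if_pos rfl,
            Int.cast_mul, show ((2:ℤ) : ZMod 2) = 0 by decide, zero_mul]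
    have hsurj : Function.Surjective phiMap := by
      rintro ⟨a, b⟩
      refine ⟨fun j => if h : (j : ℕ) < 5 then a ⟨j, h⟩ else
        if j = (5 : Fin 13) then (b.val : ℤ) else 0, ?_⟩
      refine Prod.ext ?_ ?_
      · funext i
        simp only [phiMap, LinearMap.prod_apply, Function.prod, LinearMap.funLeft_apply]
        rw [dif_pos (by exact i.isLt)]
        exact congrArg a (Fin.ext rfl)
      · simp only [phiMap, LinearMap.prod_apply, Function.prod, LinearMap.comp_apply,
          LinearMap.proj_apply, AddMonoidHom.coe_toIntLinearMap, Int.coe_castAddHom]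
        rw [dif_neg (by decide)]
        norm_num [ZMod.natCast_val, ZMod.intCast_cast, ZMod.cast_id]
    have hQsurj : Function.Surjective (Matrix.toLin' Qinv) := by
      intro v
      refine ⟨Matrix.toLin' Qsnf v, ?_⟩
      have h : Matrix.toLin' Qinv ∘ₗ Matrix.toLin' Qsnf = LinearMap.id := by
        rw [← Matrix.toLin'_mul, hQQ', Matrix.toLin'_one]
      exact LinearMap.congr_fun h v
    let eP : (Fin 13 → ℤ) ≃ₗ[ℤ] (Fin 13 → ℤ) :=
      LinearEquiv.ofLinear (Matrix.toLin' Pinv) (Matrix.toLin' Psnf)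
        (by rw [← Matrix.toLin'_mul, hPP', Matrix.toLin'_one])
        (by rw [← Matrix.toLin'_mul, hPP, Matrix.toLin'_one])
    have hmap : (LinearMap.range (Matrix.toLin' Dmat)).map
          (eP : (Fin 13 → ℤ) →ₗ[ℤ] (Fin 13 → ℤ))
        = LinearMap.range (Matrix.toLin' d1Bredon) := by
      rw [← LinearMap.range_comp]
      have he : (eP : (Fin 13 → ℤ) →ₗ[ℤ] (Fin 13 → ℤ)) = Matrix.toLin' Pinv := rfl
      rw [he, hA, Matrix.toLin'_mul, Matrix.toLin'_mul, LinearMap.range_comp,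
        LinearMap.range_comp, LinearMap.range_comp,
        LinearMap.range_eq_top.mpr hQsurj, Submodule.map_top]
    exact ⟨((Submodule.Quotient.equiv (LinearMap.range (Matrix.toLin' Dmat))
        (LinearMap.range (Matrix.toLin' d1Bredon)) eP hmap).symm.trans
      ((Submodule.quotEquivOfEq _ _ hker.symm).trans
        (phiMap.quotKerEquivOfSurjective hsurj))).toAddEquiv⟩
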